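/- Let g ∈ L²(ℝ) and let W : ℝ → ℝ be measurable with 0 ≤ W(ξ) ≤ 1 for all ξ ∈ ℝ. Then the functions ξ ↦ (1 − W(ξ))^m·g(ξ) converge in L²(ℝ), as m → ∞, to the function ξ ↦ χ_{{W=0}}(ξ)·g(ξ), i.e. to g restricted to the zero set of W (and 0 elsewhere). -/

import Mathlib

open MeasureTheory Filter ENNReal

/-- If `g ∈ L²(ℝ)` and `W : ℝ → ℝ` is measurable with values in `[0,1]`, then the functions
`ξ ↦ (1 - W ξ)^m * g ξ` converge in `L²`, as `m → ∞`, to `g` restricted to the zero set of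
`W` (i.e. to `χ_{{W = 0}} * g`). -/
theorem stmt6 (g : ℝ → ℂ) (hg : MemLp g 2 volume) (W : ℝ → ℝ) (hWmeas : Measurable W)
    (hW : ∀ ξ : ℝ, W ξ ∈ Set.Icc (0 : ℝ) 1) :
    Filter.Tendsto
      (fun m : ℕ => eLpNorm
        (fun ξ : ℝ => ((1 - W ξ : ℝ) ^ m : ℂ) * g ξ - Set.indicator {ξ : ℝ | W ξ = 0} g ξ)
        2 volume)
      Filter.atTop (nhds 0) := by
  classical
  have hSmeas : MeasurableSet {ξ : ℝ | W ξ = 0} := hWmeas (measurableSet_singleton 0)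
  set F : ℕ → ℝ → ℂ := fun m ξ =>
    ((1 - W ξ : ℝ) ^ m : ℂ) * g ξ - Set.indicator {ξ : ℝ | W ξ = 0} g ξ with hF
  have hgae : AEMeasurable g volume := hg.1.aemeasurable
  have hFae : ∀ m, AEStronglyMeasurable (F m) volume := by
    intro m
    apply AEStronglyMeasurable.sub
    · have hm : Measurable fun ξ => (((1 - W ξ : ℝ) : ℂ)) ^ m :=
        (Complex.measurable_ofReal.comp (measurable_const.sub hWmeas)).pow_const m
      exact (hm.aemeasurable.mul hgae).aestronglyMeasurable
    · exact (hgae.indicator hSmeas).aestronglyMeasurable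
  have hbound : ∀ m ξ, ‖F m ξ‖ ≤ 2 * ‖g ξ‖ := by
    intro m ξ
    have h1 : ‖((1 - W ξ : ℝ) ^ m : ℂ) * g ξ‖ ≤ ‖g ξ‖ := by
      rw [norm_mul]
      have hle : ‖((1 - W ξ : ℝ) ^ m : ℂ)‖ ≤ 1 := by
        rw [norm_pow, Complex.norm_real, Real.norm_eq_abs]
        apply pow_le_one₀ (abs_nonneg _)
        rw [abs_le]
        constructor
        · linarith [(hW ξ).2]
        · linarith [(hW ξ).1]
      nlinarith [norm_nonneg (g ξ), norm_nonneg (((1 - W ξ : ℝ) ^ m : ℂ))]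
    have h2 : ‖Set.indicator {ξ : ℝ | W ξ = 0} g ξ‖ ≤ ‖g ξ‖ := by
      by_cases h : ξ ∈ {ξ : ℝ | W ξ = 0}
      · simp [Set.indicator_of_mem h]
      · simp [Set.indicator_of_notMem h, norm_nonneg]
    calc ‖F m ξ‖ ≤ ‖((1 - W ξ : ℝ) ^ m : ℂ) * g ξ‖ + ‖Set.indicator {ξ : ℝ | W ξ = 0} g ξ‖ :=
          norm_sub_le _ _
      _ ≤ 2 * ‖g ξ‖ := by linarith
  have hptwise : ∀ ξ, Filter.Tendsto (fun m => F m ξ) Filter.atTop (nhds 0) := by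
    intro ξ
    by_cases h : W ξ = 0
    · have : ∀ m, F m ξ = 0 := by
        intro m
        simp [hF, h, Set.indicator_of_mem (show ξ ∈ {ξ : ℝ | W ξ = 0} from h)]
      simp only [this]
      exact tendsto_const_nhds
    · have h0 : 0 < W ξ := lt_of_le_of_ne (hW ξ).1 (Ne.symm h)
      have hlt : |1 - W ξ| < 1 := by
        rw [abs_lt]; constructor
        · linarith [(hW ξ).2]
        · linarith
      have hpowC : Filter.Tendsto (fun m : ℕ => (((1 - W ξ : ℝ) : ℂ)) ^ m) Filter.atTop
          (nhds 0) := by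
        apply tendsto_pow_atTop_nhds_zero_of_norm_lt_one
        rw [Complex.norm_real, Real.norm_eq_abs]
        exact hlt
      have hind : Set.indicator {ξ : ℝ | W ξ = 0} g ξ = 0 :=
        Set.indicator_of_notMem (by simpa using h) g
      have : Filter.Tendsto (fun m => F m ξ) Filter.atTop (nhds (0 * g ξ - 0)) := by
        simp only [hF, hind]
        exact (hpowC.mul tendsto_const_nhds).sub tendsto_const_nhds
      simpa using this
  -- reduce to the lintegral of the square
  have hp0 : (2 : ℝ≥0∞) ≠ 0 := by norm_num
  have hpt : (2 : ℝ≥0∞) ≠ ∞ := by norm_num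
  have hpr : (2 : ℝ≥0∞).toReal = 2 := by norm_num
  have key : Filter.Tendsto
      (fun m => ∫⁻ ξ, (‖F m ξ‖₊ : ℝ≥0∞) ^ (2 : ℝ) ∂volume) Filter.atTop (nhds 0) := by
    have hmeas : ∀ m, AEMeasurable (fun ξ => (‖F m ξ‖₊ : ℝ≥0∞) ^ (2 : ℝ)) volume := fun m =>
      ((hFae m).enorm).pow_const _
    have hb : ∀ m, (fun ξ => (‖F m ξ‖₊ : ℝ≥0∞) ^ (2 : ℝ)) ≤ᵐ[volume]
        fun ξ => ((2 : ℝ≥0∞) * (‖g ξ‖₊ : ℝ≥0∞)) ^ (2 : ℝ) := by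
      intro m
      refine Filter.Eventually.of_forall fun ξ => ?_
      apply ENNReal.rpow_le_rpow _ (by norm_num)
      have := hbound m ξ
      have h2 : ‖F m ξ‖₊ ≤ 2 * ‖g ξ‖₊ := by
        rw [← NNReal.coe_le_coe]
        push_cast
        simpa [coe_nnnorm] using this
      calc (‖F m ξ‖₊ : ℝ≥0∞) ≤ ((2 * ‖g ξ‖₊ : NNReal) : ℝ≥0∞) := ENNReal.coe_le_coe.mpr h2
        _ = (2 : ℝ≥0∞) * (‖g ξ‖₊ : ℝ≥0∞) := by push_cast; ring
    have hfin : (∫⁻ ξ, ((2 : ℝ≥0∞) * (‖g ξ‖₊ : ℝ≥0∞)) ^ (2 : ℝ) ∂volume) ≠ ∞ := by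
      have hg2 : (∫⁻ ξ, (‖g ξ‖₊ : ℝ≥0∞) ^ (2 : ℝ) ∂volume) < ∞ := by
        have := lintegral_rpow_enorm_lt_top_of_eLpNorm_lt_top hp0 hpt hg.2
        rw [hpr] at this; exact this
      have : (∫⁻ ξ, ((2 : ℝ≥0∞) * (‖g ξ‖₊ : ℝ≥0∞)) ^ (2 : ℝ) ∂volume)
          = (2 : ℝ≥0∞) ^ (2 : ℝ) * ∫⁻ ξ, (‖g ξ‖₊ : ℝ≥0∞) ^ (2 : ℝ) ∂volume := by
        rw [← lintegral_const_mul' _ _ (by norm_num)]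
        congr 1
        ext ξ
        rw [ENNReal.mul_rpow_of_nonneg _ _ (by norm_num)]
      rw [this]
      exact ENNReal.mul_ne_top (by norm_num) hg2.ne
    have hlim : ∀ᵐ ξ ∂volume,
        Filter.Tendsto (fun m => (‖F m ξ‖₊ : ℝ≥0∞) ^ (2 : ℝ)) Filter.atTop (nhds 0) := by
      refine Filter.Eventually.of_forall fun ξ => ?_
      have h1 : Filter.Tendsto (fun m => (‖F m ξ‖₊ : ℝ≥0∞)) Filter.atTop (nhds 0) := by
        have := (hptwise ξ).nnnorm
        have h2 := (ENNReal.tendsto_coe.mpr this)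
        simpa using h2
      convert (ENNReal.continuous_rpow_const (y := 2)).continuousAt.tendsto.comp h1 using 2
      all_goals simp [ENNReal.zero_rpow_of_pos (by norm_num : (0:ℝ) < 2)]
    simpa using tendsto_lintegral_of_dominated_convergence' _ hmeas hb hfin hlim
  have heq : ∀ m, eLpNorm (F m) 2 volume
      = (∫⁻ ξ, (‖F m ξ‖₊ : ℝ≥0∞) ^ (2 : ℝ) ∂volume) ^ (1 / (2 : ℝ)) := by
    intro m
    rw [eLpNorm_eq_lintegral_rpow_enorm_toReal hp0 hpt, hpr]
    rfl
  change Tendsto (fun m => eLpNorm (F m) 2 volume) atTop (nhds 0)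
  simp only [heq]
  convert (ENNReal.continuous_rpow_const (y := 1/2)).continuousAt.tendsto.comp key using 2
  all_goals simp [ENNReal.zero_rpow_of_pos (by norm_num : (0:ℝ) < 1/2)]
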